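/- There exist constants c, C > 0 such that for every n ≥ 2 and every real h ≥ C log n, in a uniform random recursive tree on n vertices whose edges carry independent Geometric(1/2) random variables, the probability that some vertex has reaching time larger than h is at most e^{−ch}. -/

import Mathlib

open MeasureTheory Filter
open scoped ENNReal

noncomputable section

/-- The `k`-th binary digit of `x ∈ [0,1)` (after the binary point). -/
def bit (x : ℝ) (k : ℕ) : Bool := ⌊x * 2 ^ (k + 1)⌋ % 2 == 1

/-- From one uniform sample on `[0,1]`, extract countably many independent uniform
samples on `[0,1]`, using disjoint subsequences of binary digits. -/
def uSlice (x : ℝ) (i : ℕ) : ℝ :=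
  ∑' j : ℕ, if bit x (Nat.pair i j) then ((2 : ℝ) ^ (-(j : ℤ) - 1)) else 0

/-- The base probability space: Lebesgue measure restricted to `[0,1]`. -/
def μ0 : Measure ℝ := volume.restrict (Set.Icc 0 1)

/-- The vertex set of the lattice `ℤ^d`. -/
abbrev V (d : ℕ) := Fin d → ℤ

instance (d : ℕ) : MeasurableSpace (Finset (V d)) := ⊤

open Classical in
/-- `B[r]`: the Euclidean ball of radius `r` in `ℤ^d`, as a `Finset`. -/
def ball (d : ℕ) (r : ℝ) : Finset (V d) :=
  (Finset.Icc (fun _ => -⌈r⌉) (fun _ => ⌈r⌉)).filter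
    (fun y => Real.sqrt (∑ i, ((y i : ℝ)) ^ 2) ≤ r)

/-- `b_n`: the number of lattice points in the Euclidean ball of radius `n`. -/
def bn (d n : ℕ) : ℕ := (ball d n).card

/-- The `2d` unit vectors of `ℤ^d` (the possible steps of the simple random walk). -/
def unitVecs (d : ℕ) : Finset (V d) :=
  Finset.image
    (fun p : Fin d × Bool => fun j => if j = p.1 then (if p.2 then 1 else -1) else 0)
    Finset.univ

/-- Given `u` uniform on `[0,1]`, `pick S u` is a uniformly chosen element of `S`. -/
def pick {d : ℕ} (S : Finset (V d)) (u : ℝ) : V d :=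
  if h : S.Nonempty then
    (S.equivFin.symm ⟨(⌊u * S.card⌋).toNat % S.card,
      Nat.mod_lt _ (Finset.card_pos.mpr h)⟩).val
  else 0

/-- Position at time `t` of the simple random walk started at `x`, driven by the
random seed `ω`: the steps `pick (unitVecs d) (uSlice ω i)` are i.i.d. uniform on
the `2d` unit vectors when `ω` is uniform on `[0,1]`. -/
def walk {d : ℕ} (x : V d) (ω : ℝ) (t : ℕ) : V d :=
  x + ∑ i ∈ Finset.range t, pick (unitVecs d) (uSlice ω i)

/-- `t_S`: the first time the walk started at `x` is outside `S`. -/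
def exitT {d : ℕ} (S : Finset (V d)) (x : V d) (ω : ℝ) : ℕ :=
  sInf {t | walk x ω t ∉ S}

/-- The position `ξ(t_S)` at which the walk started at `x` first exits `S`. -/
def hitPt {d : ℕ} (S : Finset (V d)) (x : V d) (ω : ℝ) : V d :=
  walk x ω (exitT S x ω)

/-- `Add[ξ,S]`: add to `S` the exit point of a random walk started at `x`. -/
def addPt {d : ℕ} (S : Finset (V d)) (x : V d) (ω : ℝ) : Finset (V d) :=
  insert (hitPt S x ω) S

/-- `P_x(ξ(τ_A) = y)`: the probability that the walk started at `x` exits `A` at `y`. -/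
def hitProb {d : ℕ} (A : Finset (V d)) (x y : V d) : ℝ≥0∞ :=
  μ0 {ω | hitPt A x ω = y}

/-- The outer boundary `∂A`: vertices outside `A` with a neighbour in `A`. -/
def outb {d : ℕ} (A : Finset (V d)) : Finset (V d) :=
  (A.biUnion fun x => (unitVecs d).image (fun e => x + e)) \ A

/-- `DA_X(S)`: the IDLA aggregate obtained from `S` by launching one particle from each
point of the list `xs` in turn (driven by independent slices of the seed `ω`). -/
def daFrom {d : ℕ} : Finset (V d) → List (V d) → ℝ → Finset (V d)
  | S, [], _ => S
  | S, x :: xs, ω => daFrom (addPt S x (uSlice ω 0)) xs (uSlice ω 1)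

/-- The law of the IDLA aggregate `DA_X(S)`. -/
def daLaw {d : ℕ} (S : Finset (V d)) (xs : List (V d)) : Measure (Finset (V d)) :=
  μ0.map (fun ω => daFrom S xs ω)

/-- One uIDLA step: launch a particle from a uniformly chosen point of `S`. -/
def uStep {d : ℕ} (S : Finset (V d)) (ω : ℝ) : Finset (V d) :=
  addPt S (pick S (uSlice ω 0)) (uSlice ω 1)

/-- `A_k(S)`: the uIDLA aggregate obtained by adding `k` particles to `S`,
each started at a uniform point of the current aggregate. -/
def uAggFrom {d : ℕ} (S : Finset (V d)) (ω : ℝ) : ℕ → Finset (V d)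
  | 0 => S
  | k + 1 => uStep (uAggFrom S ω k) (uSlice ω k)

/-- The law of the uIDLA aggregate `A_k(S)`. -/
def uLaw {d : ℕ} (S : Finset (V d)) (k : ℕ) : Measure (Finset (V d)) :=
  μ0.map (fun ω => uAggFrom S ω k)

/-- One step of the subset uIDLA `A_·(E;m)`: at step `k`, perform a uIDLA step
with probability `|E|/(m+k)` and otherwise do nothing. -/
def subStep {d : ℕ} (m k : ℕ) (E : Finset (V d)) (ω : ℝ) : Finset (V d) :=
  if uSlice ω 0 * ((m : ℝ) + k) ≤ E.card then uStep E (uSlice ω 1) else E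

/-- The subset uIDLA `A_n(E;m)`. -/
def subAggFrom {d : ℕ} (E : Finset (V d)) (m : ℕ) (ω : ℝ) : ℕ → Finset (V d)
  | 0 => E
  | k + 1 => subStep m k (subAggFrom E m ω k) (uSlice ω k)

/-- The law of the subset uIDLA `A_n(E;m)`. -/
def subLaw {d : ℕ} (E : Finset (V d)) (m k : ℕ) : Measure (Finset (V d)) :=
  μ0.map (fun ω => subAggFrom E m ω k)

/-- Stochastic domination of random finite subsets of `ℤ^d`: `μ` dominates `ν` if
there is a coupling under which the sample of `ν` is a.s. contained in that of `μ`. -/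
def StochDom {d : ℕ} (μ ν : Measure (Finset (V d))) : Prop :=
  ∃ π : Measure (Finset (V d) × Finset (V d)), IsProbabilityMeasure π ∧
    π.map Prod.fst = μ ∧ π.map Prod.snd = ν ∧ π {p | p.2 ⊆ p.1} = 1

/-- A `Geometric(1/2)` sample (taking value `j ≥ 0` with probability `2^{-(j+1)}`)
produced from a uniform sample `u` on `[0,1]` by inverting the CDF. -/
def geom (u : ℝ) : ℕ := sInf {j : ℕ | u ≤ 1 - (2 : ℝ) ^ (-(j : ℤ) - 1)}

/-- The parent of vertex `j ≥ 1` in the uniform random recursive tree (vertex `0` is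
the root): uniform on `{0, …, j-1}` when the seed is uniform on `[0,1]`. -/
def parent (ω : ℝ) (j : ℕ) : ℕ := (⌊uSlice ω (Nat.pair 0 j) * j⌋).toNat % j

/-- The reaching time of vertex `j` in a uniform random recursive tree whose edges
carry i.i.d. `Geometric(1/2)` weights: the sum of the weights on the path from the
root to `j`. (The `min` is a.s. inoperative, since a.s. `parent ω (j+1) ≤ j`.) -/
def reach (ω : ℝ) : ℕ → ℕ
  | 0 => 0
  | j + 1 => reach ω (min (parent ω (j + 1)) j) + geom (uSlice ω (Nat.pair 1 (j + 1)))
termination_by j => j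
decreasing_by exact Nat.lt_succ_of_le (min_le_right _ _)

end

namespace S12
open Finset
noncomputable section

lemma zp (j : ℕ) : (2:ℝ)^(-(j:ℤ)-1) = (1/2:ℝ)^(j+1) := by
  rw [one_div, inv_pow, ← zpow_natCast (2:ℝ) (j+1), ← zpow_neg]
  norm_num
  ring

def sl (ω : ℝ) (i j : ℕ) : Bool := bit ω (Nat.pair i j)

def term (ω : ℝ) (i j : ℕ) : ℝ := if sl ω i j then (1/2:ℝ)^(j+1) else 0

lemma uSlice_eq (ω : ℝ) (i : ℕ) : uSlice ω i = ∑' j, term ω i j := by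
  unfold uSlice term sl; congr 1; funext j; rw [zp]

lemma term_nonneg (ω : ℝ) (i j : ℕ) : 0 ≤ term ω i j := by
  unfold term; split
  · positivity
  · exact le_rfl

lemma term_le (ω : ℝ) (i j : ℕ) : term ω i j ≤ (1/2:ℝ)^(j+1) := by
  unfold term; split
  · exact le_rfl
  · positivity

lemma summable_half : Summable (fun j : ℕ => (1/2:ℝ)^(j+1)) := by
  exact (summable_geometric_two).comp_injective (add_left_injective 1) |>.congr (fun j => rfl)

lemma tsum_half : ∑' j : ℕ, (1/2:ℝ)^(j+1) = 1 := by
  calc ∑' j : ℕ, (1/2:ℝ)^(j+1) = ∑' n : ℕ, (1:ℝ)/2/2^n :=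
        tsum_congr fun j => by rw [pow_succ']; simp [one_div, inv_pow, div_eq_mul_inv]
    _ = 1 := tsum_geometric_two' 1

lemma summable_term (ω : ℝ) (i : ℕ) : Summable (term ω i) :=
  Summable.of_nonneg_of_le (term_nonneg ω i) (term_le ω i) summable_half

lemma uSlice_nonneg (ω : ℝ) (i : ℕ) : 0 ≤ uSlice ω i := by
  rw [uSlice_eq]
  exact tsum_nonneg (term_nonneg ω i)

lemma uSlice_le_one (ω : ℝ) (i : ℕ) : uSlice ω i ≤ 1 := by
  rw [uSlice_eq, ← tsum_half]
  exact Summable.tsum_le_tsum (term_le ω i) (summable_term ω i) summable_half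

def Y (ω : ℝ) (i T : ℕ) : ℝ := ∑ j ∈ range T, term ω i j

lemma tail_eq (ω : ℝ) (i T : ℕ) :
    uSlice ω i = Y ω i T + ∑' j, term ω i (j + T) := by
  rw [uSlice_eq, ← (summable_term ω i).sum_add_tsum_nat_add T]; rfl

lemma Y_le_uSlice (ω : ℝ) (i T : ℕ) : Y ω i T ≤ uSlice ω i := by
  rw [tail_eq ω i T]
  have : 0 ≤ ∑' j, term ω i (j + T) :=
    tsum_nonneg (fun j => term_nonneg ω i _)
  linarith

lemma uSlice_le_Y (ω : ℝ) (i T : ℕ) : uSlice ω i ≤ Y ω i T + (1/2:ℝ)^T := by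
  rw [tail_eq ω i T]
  have h1 : ∑' j, term ω i (j + T) ≤ ∑' j : ℕ, (1/2:ℝ)^T * (1/2:ℝ)^(j+1) := by
    refine Summable.tsum_le_tsum (fun j => ?_) ((summable_term ω i).comp_injective (add_left_injective T))
      (summable_half.mul_left _)
    calc term ω i (j + T) ≤ (1/2:ℝ)^(j+T+1) := term_le ω i _
    _ = (1/2:ℝ)^T * (1/2:ℝ)^(j+1) := by ring
  have h2 : ∑' j : ℕ, (1/2:ℝ)^T * (1/2:ℝ)^(j+1) = (1/2:ℝ)^T := by
    rw [tsum_mul_left, tsum_half, mul_one]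
  linarith
lemma bit_true_of_gt {ω : ℝ} {i j : ℕ} (h : 1 - (1/2:ℝ)^(j+1) < uSlice ω i) :
    sl ω i j = true := by
  by_contra hb
  have hb' : sl ω i j = false := by simpa using hb
  have : uSlice ω i ≤ 1 - (1/2:ℝ)^(j+1) := by
    rw [uSlice_eq]
    have h1 : ∑' k, term ω i k ≤ ∑' k : ℕ, (if k = j then 0 else (1/2:ℝ)^(k+1)) := by
      refine Summable.tsum_le_tsum (fun k => ?_) (summable_term ω i) ?_
      · by_cases hk : k = j
        · subst hk; simp [term, hb']
        · simp only [hk, if_false]; exact term_le ω i k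
      · exact summable_half.summable_of_eq_zero_or_self (fun k => by by_cases hk : k = j <;> simp [hk])
    have h2 : ∑' k : ℕ, (if k = j then 0 else (1/2:ℝ)^(k+1)) = 1 - (1/2:ℝ)^(j+1) := by
      have := summable_half.tsum_eq_add_tsum_ite j
      rw [tsum_half] at this
      have h3 : ∑' k : ℕ, (if k = j then 0 else (1/2:ℝ)^(k+1)) = 1 - (1/2)^(j+1) := by
        linarith
      exact h3
    linarith
  linarith

lemma geom_ge {u : ℝ} {a : ℕ} (h : a ≤ geom u) : ∀ j, j < a → 1 - (1/2:ℝ)^(j+1) < u := by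
  intro j hj
  by_contra hle
  push_neg at hle
  have : j ∈ {j : ℕ | u ≤ 1 - (2 : ℝ) ^ (-(j : ℤ) - 1)} := by
    simp only [Set.mem_setOf_eq, zp]; linarith
  have := Nat.sInf_le this
  unfold geom at h
  omega

-- ## Binary representation lemmas

lemma sum_cond_lt (c : ℕ → Bool) (T : ℕ) : (∑ t ∈ range T, cond (c t) (2^t) 0) < 2^T := by
  induction T with
  | zero => simp
  | succ T ih =>
    rw [sum_range_succ, pow_succ]
    have : cond (c T) (2^T) 0 ≤ 2^T := by cases c T <;> simp
    omega

lemma TB0 (c : ℕ → Bool) (T : ℕ) : ∀ s, s < T →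
    (∑ t ∈ range T, cond (c t) (2^t) 0).testBit s = c s := by
  induction T with
  | zero => omega
  | succ T ih =>
    intro s hs
    rw [sum_range_succ]
    rcases Nat.lt_or_ge s T with h | h
    · cases hcT : c T
      · simpa using ih s h
      · rw [Bool.cond_true]
        have key : ((∑ t ∈ range T, cond (c t) (2^t) 0) + 2^T) / 2^s % 2
            = (∑ t ∈ range T, cond (c t) (2^t) 0) / 2^s % 2 := by
          have h2 : (∑ t ∈ range T, cond (c t) (2^t) 0) + 2^T
              = (∑ t ∈ range T, cond (c t) (2^t) 0) + 2^(T-s) * 2^s := by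
            rw [← pow_add]; congr 2; omega
          rw [h2, Nat.add_mul_div_right _ _ (Nat.two_pow_pos s)]
          have h3 : 2^(T-s) = 2 * 2^(T-s-1) := by
            rw [← pow_succ']; congr 1; omega
          rw [h3, Nat.add_mul_mod_self_left]
        rw [Nat.testBit_eq_decide_div_mod_eq, key, ← Nat.testBit_eq_decide_div_mod_eq]
        exact ih s h
    · have hsT : s = T := by omega
      subst hsT
      cases hcs : c s
      · rw [Bool.cond_false, add_zero]
        exact Nat.testBit_lt_two_pow (sum_cond_lt c s)
      · rw [Bool.cond_true]
        rw [Nat.testBit_eq_decide_div_mod_eq]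
        have h1 : ((∑ t ∈ range s, cond (c t) (2^t) 0) + 2^s) / 2^s
            = (∑ t ∈ range s, cond (c t) (2^t) 0) / 2^s + 1 :=
          Nat.add_div_right _ (Nat.two_pow_pos s)
        have h2 : (∑ t ∈ range s, cond (c t) (2^t) 0) / 2^s = 0 :=
          Nat.div_eq_of_lt (sum_cond_lt c s)
        rw [h1, h2]
        rfl

def Kof (ω : ℝ) (i T : ℕ) : ℕ := ∑ j ∈ range T, cond (sl ω i j) (2^(T-1-j)) 0

lemma Kof_eq (ω : ℝ) (i T : ℕ) :
    Kof ω i T = ∑ t ∈ range T, cond (sl ω i (T-1-t)) (2^t) 0 := by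
  unfold Kof
  rw [← Finset.sum_range_reflect (fun t => cond (sl ω i (T-1-t)) (2^t) 0) T]
  refine Finset.sum_congr rfl (fun j hj => ?_)
  rw [Finset.mem_range] at hj
  congr 2
  omega

lemma Kof_lt (ω : ℝ) (i T : ℕ) : Kof ω i T < 2^T := by
  rw [Kof_eq]; exact sum_cond_lt _ T

lemma Kof_testBit (ω : ℝ) (i : ℕ) {j T : ℕ} (hj : j < T) :
    (Kof ω i T).testBit (T-1-j) = sl ω i j := by
  rw [Kof_eq, TB0 _ T (T-1-j) (by omega)]
  congr 1
  omega

lemma sum_two_pow (T : ℕ) : ∑ t ∈ range T, 2^t = 2^T - 1 := by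
  induction T with
  | zero => simp
  | succ T ih =>
    rw [sum_range_succ, ih, pow_succ]
    have := Nat.one_le_two_pow (n := T)
    omega

lemma Kof_allTrue {ω : ℝ} {i T : ℕ} (h : ∀ j, j < T → sl ω i j = true) :
    Kof ω i T = 2^T - 1 := by
  rw [Kof_eq]
  have heq : ∀ t ∈ range T, cond (sl ω i (T-1-t)) (2^t) 0 = 2^t := by
    intro t ht
    rw [Finset.mem_range] at ht
    rw [h (T-1-t) (by omega), Bool.cond_true]
  rw [Finset.sum_congr rfl heq, sum_two_pow]

lemma Y_eq_Kof (ω : ℝ) (i T : ℕ) : Y ω i T = (Kof ω i T : ℝ)/2^T := by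
  unfold Y Kof
  rw [Nat.cast_sum, Finset.sum_div]
  refine Finset.sum_congr rfl (fun j hj => ?_)
  rw [Finset.mem_range] at hj
  have hTj : (2:ℝ)^(T-1-j) / 2^T = (1/2:ℝ)^(j+1) := by
    have hpow : (2:ℝ)^(T-1-j) * 2^(j+1) = 2^T := by
      rw [← pow_add]; congr 1; omega
    rw [div_eq_iff (by positivity)]
    rw [div_pow, one_pow, div_mul_eq_mul_div, eq_div_iff (by positivity), one_mul, hpow]
  cases hb : sl ω i j <;> simp [term, hb, hTj]

-- ## Dyadic interval lemma

lemma bit_dyadic {K N k : ℕ} (hK : K < 2^N) (hk : k < N) {x : ℝ}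
    (hx1 : (K:ℝ)/2^N ≤ x) (hx2 : x < ((K:ℝ)+1)/2^N) :
    bit x k = K.testBit (N-1-k) := by
  set s := N - 1 - k with hs
  set q := K / 2^s with hq
  have hsk : s + (k+1) = N := by omega
  have hx0 : (0:ℝ) < 2^N := by positivity
  have hfl : ⌊x * 2^(k+1)⌋ = (q:ℤ) := by
    rw [Int.floor_eq_iff]
    constructor
    · calc ((q:ℝ)) ≤ (K:ℝ)/2^s := by
            rw [le_div_iff₀ (by positivity)]
            exact_mod_cast Nat.div_mul_le_self K (2^s)
      _ = (K:ℝ)/2^N * 2^(k+1) := by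
            rw [← hsk]; rw [pow_add]; field_simp
      _ ≤ x * 2^(k+1) := by
            have : (0:ℝ) < 2^(k+1) := by positivity
            nlinarith [hx1]
    · calc x * 2^(k+1) < ((K:ℝ)+1)/2^N * 2^(k+1) := by
            have : (0:ℝ) < 2^(k+1) := by positivity
            nlinarith [hx2]
      _ = ((K:ℝ)+1)/2^s := by
            rw [← hsk]; rw [pow_add]; field_simp
      _ ≤ (q:ℝ) + 1 := by
            rw [div_le_iff₀ (by positivity)]
            have hn : K + 1 ≤ (q+1) * 2^s := by
              have h1 : K % 2^s < 2^s := Nat.mod_lt _ (Nat.two_pow_pos s)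
              have h2 : 2^s * q + K % 2^s = K := Nat.div_add_mod K (2^s)
              nlinarith
            calc ((K:ℝ)+1) = ((K+1 : ℕ) : ℝ) := by push_cast; ring
            _ ≤ (((q+1) * 2^s : ℕ) : ℝ) := by exact_mod_cast hn
            _ = ((q:ℝ)+1) * 2^s := by push_cast; ring
  unfold bit
  rw [hfl, Nat.testBit_eq_decide_div_mod_eq, ← hq]
  have : ((q:ℤ)) % 2 = ((q % 2 : ℕ) : ℤ) := by push_cast; ring
  rw [this]
  rcases Nat.mod_two_eq_zero_or_one q with h | h <;> simp [h]

-- ## Counting patterns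

lemma count_patterns (N : ℕ) (π : ℕ → Bool) : ∀ (F : Finset ℕ), (∀ p ∈ F, p < N) →
    (((range (2^N)).filter (fun K => ∀ p ∈ F, K.testBit (N-1-p) = π p)).card) * 2^F.card
      ≤ 2^N := by
  classical
  intro F
  induction F using Finset.induction_on with
  | empty => intro _; simp
  | @insert k F hk ih =>
    intro hF
    have hkN : k < N := hF k (Finset.mem_insert_self k F)
    have hFN : ∀ p ∈ F, p < N := fun p hp => hF p (Finset.mem_insert_of_mem hp)
    set M' := (range (2^N)).filter (fun K => ∀ p ∈ F, K.testBit (N-1-p) = π p) with hM'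
    set Mb := M'.filter (fun K => K.testBit (N-1-k) = π k) with hMb
    set Mc := M'.filter (fun K => K.testBit (N-1-k) = !(π k)) with hMc
    have hMeq : (range (2^N)).filter (fun K => ∀ p ∈ insert k F, K.testBit (N-1-p) = π p)
        = Mb := by
      rw [hMb, hM', Finset.filter_filter]
      refine Finset.filter_congr (fun K hK => ?_)
      simp only [Finset.mem_insert]
      constructor
      · intro hall; exact ⟨fun p hp => hall p (Or.inr hp), hall k (Or.inl rfl)⟩
      · rintro ⟨h1, h2⟩ p hp; rcases hp with rfl | hp; exacts [h2, h1 p hp]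
    have hinj : ∀ K ∈ Mb, K ^^^ 2^(N-1-k) ∈ Mc := by
      intro K hK
      rw [hMb, Finset.mem_filter] at hK
      obtain ⟨hK', hbit⟩ := hK
      rw [hM', Finset.mem_filter, Finset.mem_range] at hK'
      obtain ⟨hKlt, hKF⟩ := hK'
      have hxlt : K ^^^ 2^(N-1-k) < 2^N :=
        Nat.xor_lt_two_pow hKlt (Nat.pow_lt_pow_right (by norm_num) (by omega))
      rw [hMc, Finset.mem_filter, hM', Finset.mem_filter, Finset.mem_range]
      refine ⟨⟨hxlt, fun p hp => ?_⟩, ?_⟩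
      · rw [Nat.testBit_xor, Nat.testBit_two_pow]
        have hpk : p ≠ k := fun h => hk (h ▸ hp)
        have hpN : p < N := hFN p hp
        have : (N-1-k = N-1-p) = False := by
          simp only [eq_iff_iff, iff_false]; omega
        simp [this, hKF p hp]
      · rw [Nat.testBit_xor, Nat.testBit_two_pow]
        simp [hbit]
    have hcard : Mb.card ≤ Mc.card := by
      apply Finset.card_le_card_of_injOn (fun K => K ^^^ 2^(N-1-k)) hinj
      intro a _ b _ hab
      dsimp only at hab
      have h2 := congrArg (fun t => t ^^^ 2^(N-1-k)) hab
      simpa [Nat.xor_assoc] using h2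
    have hsplit : Mb.card + Mc.card ≤ M'.card := by
      have hdisj : Disjoint Mb Mc := by
        rw [Finset.disjoint_filter]
        intro K _ h1 h2
        rw [h1] at h2
        cases π k <;> simp at h2
      rw [← Finset.card_union_of_disjoint hdisj]
      exact Finset.card_le_card (Finset.union_subset (Finset.filter_subset _ _) (Finset.filter_subset _ _))
    have ihF := ih hFN
    rw [hMeq, Finset.card_insert_of_notMem hk, pow_succ]
    calc Mb.card * (2^F.card * 2) = (2 * Mb.card) * 2^F.card := by ring
    _ ≤ (Mb.card + Mc.card) * 2^F.card := by
        have : 2 * Mb.card ≤ Mb.card + Mc.card := by omega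
        exact Nat.mul_le_mul_right _ this
    _ ≤ M'.card * 2^F.card := Nat.mul_le_mul_right _ hsplit
    _ ≤ 2^N := ihF

-- ## Cylinder measure

lemma two_pow_inv_ofReal (N : ℕ) :
    ENNReal.ofReal ((1:ℝ)/2^N) = ((2:ℝ≥0∞)^N)⁻¹ := by
  rw [one_div, ENNReal.ofReal_inv_of_pos (by positivity), ENNReal.ofReal_pow (by norm_num)]
  norm_num

lemma cyl_measure (F : Finset ℕ) (π : ℕ → Bool) :
    μ0 {x | ∀ p ∈ F, bit x p = π p} ≤ (2:ℝ≥0∞)⁻¹ ^ F.card := by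
  classical
  set N := (F.sup id) + 1 with hN
  have hF : ∀ p ∈ F, p < N := fun p hp =>
    Nat.lt_succ_of_le (Finset.le_sup (f := id) hp)
  set M := (range (2^N)).filter (fun K => ∀ p ∈ F, K.testBit (N-1-p) = π p) with hM
  set U : Set ℝ := ⋃ K ∈ M, Set.Ico ((K:ℝ)/2^N) (((K:ℝ)+1)/2^N) with hU
  have hsub : {x | ∀ p ∈ F, bit x p = π p} ⊆ U ∪ {1} ∪ (Set.Icc (0:ℝ) 1)ᶜ := by
    intro x hx
    by_cases hxI : x ∈ Set.Icc (0:ℝ) 1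
    · rcases eq_or_lt_of_le hxI.2 with h1 | h1
      · exact Or.inl (Or.inr h1)
      · left; left
        have hx0 : (0:ℝ) ≤ x := hxI.1
        set K := (⌊x * 2^N⌋).toNat with hK
        have h2N : (0:ℝ) < 2^N := by positivity
        have hfl0 : (0:ℤ) ≤ ⌊x * 2^N⌋ := Int.floor_nonneg.mpr (by positivity)
        have hKx : (K:ℝ) ≤ x * 2^N := by
          rw [hK]
          rw [show ((((⌊x * 2^N⌋).toNat : ℕ)):ℝ) = ((⌊x * 2^N⌋ : ℤ) : ℝ) by
            exact_mod_cast congrArg (fun z => ((z:ℤ):ℝ)) (Int.toNat_of_nonneg hfl0)]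
          exact Int.floor_le _
        have hxK : x * 2^N < (K:ℝ) + 1 := by
          rw [hK]
          have := Int.lt_floor_add_one (x * 2^N)
          rw [show ((((⌊x * 2^N⌋).toNat : ℕ)):ℝ) = ((⌊x * 2^N⌋ : ℤ) : ℝ) by
            exact_mod_cast congrArg (fun z => ((z:ℤ):ℝ)) (Int.toNat_of_nonneg hfl0)]
          exact this
        have hKlt : K < 2^N := by
          have : (K:ℝ) < 2^N := by nlinarith
          exact_mod_cast this
        have hx1 : (K:ℝ)/2^N ≤ x := by rw [div_le_iff₀ h2N]; linarith
        have hx2 : x < ((K:ℝ)+1)/2^N := by rw [lt_div_iff₀ h2N]; linarith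
        have hKM : K ∈ M := by
          rw [hM, Finset.mem_filter, Finset.mem_range]
          refine ⟨hKlt, fun p hp => ?_⟩
          rw [← bit_dyadic hKlt (hF p hp) hx1 hx2]
          exact hx p hp
        exact Set.mem_biUnion hKM ⟨hx1, hx2⟩
    · exact Or.inr hxI
  have hμU : μ0 U ≤ (M.card : ℝ≥0∞) * ENNReal.ofReal ((1:ℝ)/2^N) := by
    have h1 : μ0 U ≤ volume U := Measure.le_iff'.mp Measure.restrict_le_self U
    refine le_trans h1 ?_
    refine le_trans (measure_biUnion_finset_le M _) ?_
    have : ∀ K ∈ M, volume (Set.Ico ((K:ℝ)/2^N) (((K:ℝ)+1)/2^N))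
        = ENNReal.ofReal ((1:ℝ)/2^N) := by
      intro K _
      rw [Real.volume_Ico]
      congr 1
      ring
    rw [Finset.sum_congr rfl this, Finset.sum_const, nsmul_eq_mul]
  have hμ1 : μ0 ({1} : Set ℝ) = 0 := by
    have : μ0 ({1} : Set ℝ) ≤ volume ({1} : Set ℝ) :=
      Measure.le_iff'.mp Measure.restrict_le_self _
    simpa [Real.volume_singleton] using this
  have hμc : μ0 ((Set.Icc (0:ℝ) 1)ᶜ) = 0 := by
    rw [μ0, Measure.restrict_apply (measurableSet_Icc.compl)]
    simp
  have hcount := count_patterns N π F hF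
  calc μ0 {x | ∀ p ∈ F, bit x p = π p}
      ≤ μ0 (U ∪ {1} ∪ (Set.Icc (0:ℝ) 1)ᶜ) := measure_mono hsub
    _ ≤ μ0 (U ∪ {1}) + μ0 ((Set.Icc (0:ℝ) 1)ᶜ) := measure_union_le _ _
    _ ≤ μ0 U + μ0 ({1} : Set ℝ) + μ0 ((Set.Icc (0:ℝ) 1)ᶜ) := by
        gcongr
        exact measure_union_le _ _
    _ = μ0 U := by rw [hμ1, hμc]; ring
    _ ≤ (M.card : ℝ≥0∞) * ENNReal.ofReal ((1:ℝ)/2^N) := hμU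
    _ ≤ (2:ℝ≥0∞)⁻¹ ^ F.card := by
        rw [two_pow_inv_ofReal]
        have hfin : ((2:ℝ≥0∞)^N) ≠ ⊤ := ENNReal.pow_ne_top (by norm_num)
        have h0 : ((2:ℝ≥0∞)^N) ≠ 0 := by positivity
        have hc : ((M.card * 2^F.card : ℕ) : ℝ≥0∞) ≤ ((2^N : ℕ) : ℝ≥0∞) :=
          Nat.cast_le.mpr hcount
        push_cast at hc
        have hMle : (M.card : ℝ≥0∞) ≤ 2⁻¹^F.card * 2^N := by
          rw [← ENNReal.inv_pow, ← ENNReal.div_eq_inv_mul,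
            ENNReal.le_div_iff_mul_le (Or.inl (by positivity))
              (Or.inl (ENNReal.pow_ne_top (by norm_num)))]
          exact hc
        calc (M.card:ℝ≥0∞) * ((2:ℝ≥0∞)^N)⁻¹ ≤ (2⁻¹^F.card * 2^N) * ((2:ℝ≥0∞)^N)⁻¹ := by gcongr
        _ = 2⁻¹^F.card * ((2^N) * ((2:ℝ≥0∞)^N)⁻¹) := by ring
        _ = 2⁻¹^F.card := by rw [ENNReal.mul_inv_cancel h0 hfin, mul_one]

-- ## PK : allowed pattern indices for a parent step

open Classical in
def PK (v w T : ℕ) : Finset ℕ :=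
  ((range (2^T)).filter
    (fun K : ℕ => (w:ℝ)/v ≤ ((K:ℝ)+1)/2^T ∧ (K:ℝ)/2^T ≤ ((w:ℝ)+1)/v)) ∪ {2^T - 1}

lemma PK_card {v T : ℕ} (w : ℕ) (hv : 1 ≤ v) (hT : 4*v ≤ 2^T) :
    (PK v w T).card * v ≤ 2^(T+1) := by
  classical
  have hv' : (0:ℝ) < v := by exact_mod_cast hv
  have h2T : (0:ℝ) < 2^T := by positivity
  have hsub : ((range (2^T)).filter
      (fun K : ℕ => (w:ℝ)/v ≤ ((K:ℝ)+1)/2^T ∧ (K:ℝ)/2^T ≤ ((w:ℝ)+1)/v))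
      ⊆ Finset.Icc ((w*2^T)/v - 1) (((w+1)*2^T)/v) := by
    intro K hK
    rw [Finset.mem_filter, Finset.mem_range] at hK
    obtain ⟨_, h1, h2⟩ := hK
    rw [div_le_div_iff₀ hv' h2T] at h1
    rw [div_le_div_iff₀ h2T hv'] at h2
    have h1' : w * 2^T ≤ v * (K+1) := by
      have : ((w * 2^T : ℕ) : ℝ) ≤ ((v * (K+1) : ℕ) : ℝ) := by push_cast; nlinarith
      exact_mod_cast this
    have h2' : K * v ≤ (w+1) * 2^T := by
      have : ((K * v : ℕ) : ℝ) ≤ (((w+1) * 2^T : ℕ) : ℝ) := by push_cast; nlinarith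
      exact_mod_cast this
    rw [Finset.mem_Icc]
    constructor
    · have : (w*2^T)/v ≤ K + 1 := by
        calc (w*2^T)/v ≤ (v*(K+1))/v := Nat.div_le_div_right h1'
        _ = K+1 := Nat.mul_div_cancel_left _ hv
      omega
    · rw [Nat.le_div_iff_mul_le hv]
      exact h2'
  have hU : ((w+1)*2^T)/v ≤ (w*2^T)/v + (2^T)/v + 1 := by
    have he : (w+1)*2^T = w*2^T + 2^T := by ring
    rw [he, Nat.add_div hv]
    split <;> omega
  have hcard1 : ((range (2^T)).filter
      (fun K : ℕ => (w:ℝ)/v ≤ ((K:ℝ)+1)/2^T ∧ (K:ℝ)/2^T ≤ ((w:ℝ)+1)/v)).card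
      ≤ (2^T)/v + 3 := by
    calc _ ≤ (Finset.Icc ((w*2^T)/v - 1) (((w+1)*2^T)/v)).card := Finset.card_le_card hsub
    _ = ((w+1)*2^T)/v + 1 - ((w*2^T)/v - 1) := Nat.card_Icc _ _
    _ ≤ (2^T)/v + 3 := by
        generalize hx : (w*2^T)/v = x at hU ⊢
        generalize hy : ((w+1)*2^T)/v = y at hU ⊢
        generalize hz : (2^T)/v = z at hU ⊢
        omega
  have hPK : (PK v w T).card ≤ (2^T)/v + 4 := by
    have h3 := Finset.card_union_le ((range (2^T)).filter
      (fun K : ℕ => (w:ℝ)/v ≤ ((K:ℝ)+1)/2^T ∧ (K:ℝ)/2^T ≤ ((w:ℝ)+1)/v)) ({2^T - 1} : Finset ℕ)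
    have h4 : ({2^T - 1} : Finset ℕ).card = 1 := by simp
    unfold PK
    omega
  have hdm : ((2^T)/v) * v ≤ 2^T := Nat.div_mul_le_self (2^T) v
  calc (PK v w T).card * v ≤ ((2^T)/v + 4) * v := Nat.mul_le_mul_right _ hPK
  _ = ((2^T)/v) * v + 4 * v := by ring
  _ ≤ 2^T + 2^T := by omega
  _ = 2^(T+1) := by ring

-- ## Cylinder events indexed by lists

def SliceCyl (i T K : ℕ) : Set ℝ := {ω | ∀ j, j < T → sl ω i j = K.testBit (T-1-j)}
def AllTrue (i a : ℕ) : Set ℝ := {ω | ∀ j, j < a → sl ω i j = true}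

abbrev E4 := ℕ × ℕ × ℕ × ℕ

def Cyl (T : ℕ) : List E4 → Set ℝ
  | [] => Set.univ
  | (v, _, a, K) :: L => (SliceCyl (Nat.pair 0 v) T K ∩ AllTrue (Nat.pair 1 v) a) ∩ Cyl T L

def Valid (T : ℕ) : ℕ → ℕ → List E4 → Prop
  | _, r, [] => r = 0
  | j, r, (v, w, a, K) :: L =>
      0 < r ∧ v = j ∧ 0 < j ∧ w < j ∧ a ≤ r ∧ K ∈ PK j w T ∧ Valid T w (r - a) L

def sumA : List E4 → ℕ
  | [] => 0
  | (_,_,a,_) :: L => a + sumA L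

def Fse (T : ℕ) : List E4 → Finset ℕ
  | [] => ∅
  | (v,_,a,_) :: L => (((range T).image (fun j => Nat.pair (Nat.pair 0 v) j))
      ∪ ((range a).image (fun j => Nat.pair (Nat.pair 1 v) j))) ∪ Fse T L

def piL (T : ℕ) : List E4 → ℕ → Bool
  | [], _ => true
  | (v,_,_,K) :: L, p =>
      if (Nat.unpair p).1 = Nat.pair 0 v then K.testBit (T-1-(Nat.unpair p).2)
      else if (Nat.unpair p).1 = Nat.pair 1 v then true
      else piL T L p

lemma vert_le {T : ℕ} : ∀ {L : List E4} {j r : ℕ}, Valid T j r L → ∀ e ∈ L, e.1 ≤ j := by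
  intro L
  induction L with
  | nil => intro j r _ e he; simp at he
  | cons e0 L ih =>
    obtain ⟨v, w, a, K⟩ := e0
    intro j r hV e he
    obtain ⟨_, rfl, _, hw, _, _, hV'⟩ := hV
    rcases List.mem_cons.mp he with rfl | he'
    · exact le_rfl
    · exact le_trans (ih hV' e he') (le_of_lt hw)

lemma sumA_valid {T : ℕ} : ∀ {L : List E4} {j r : ℕ}, Valid T j r L → sumA L = r := by
  intro L
  induction L with
  | nil => intro j r hV; exact hV.symm
  | cons e0 L ih =>
    obtain ⟨v, w, a, K⟩ := e0
    intro j r hV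
    obtain ⟨_, _, _, _, har, _, hV'⟩ := hV
    have := ih hV'
    simp only [sumA]
    omega

lemma mem_Fse {T : ℕ} : ∀ {L : List E4} {p : ℕ}, p ∈ Fse T L →
    ∃ e ∈ L, ∃ b j0, p = Nat.pair (Nat.pair b e.1) j0 := by
  intro L
  induction L with
  | nil => intro p hp; simp [Fse] at hp
  | cons e0 L ih =>
    obtain ⟨v, w, a, K⟩ := e0
    intro p hp
    simp only [Fse, Finset.mem_union, Finset.mem_image, Finset.mem_range] at hp
    rcases hp with (⟨j0, _, rfl⟩ | ⟨j0, _, rfl⟩) | hp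
    · exact ⟨(v,w,a,K), List.mem_cons_self, 0, j0, rfl⟩
    · exact ⟨(v,w,a,K), List.mem_cons_self, 1, j0, rfl⟩
    · obtain ⟨e, he, b, j0, rfl⟩ := ih hp
      exact ⟨e, List.mem_cons_of_mem _ he, b, j0, rfl⟩

lemma Fse_card {T : ℕ} : ∀ {L : List E4} {j r : ℕ}, Valid T j r L →
    (Fse T L).card = L.length * T + sumA L := by
  intro L
  induction L with
  | nil => intro j r _; simp [Fse, sumA]
  | cons e0 L ih =>
    obtain ⟨v, w, a, K⟩ := e0
    intro j r hV
    obtain ⟨_, rfl, hj, hw, har, _, hV'⟩ := hV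
    have hpinj : ∀ c : ℕ, Function.Injective (fun j0 => Nat.pair c j0) := by
      intro c x y hxy
      simpa using (Nat.pair_eq_pair.mp hxy).2
    have hc0 : ((range T).image (fun j0 => Nat.pair (Nat.pair 0 v) j0)).card = T := by
      rw [Finset.card_image_of_injective _ (hpinj _), Finset.card_range]
    have hc1 : ((range a).image (fun j0 => Nat.pair (Nat.pair 1 v) j0)).card = a := by
      rw [Finset.card_image_of_injective _ (hpinj _), Finset.card_range]
    have hd01 : Disjoint ((range T).image (fun j0 => Nat.pair (Nat.pair 0 v) j0))
        ((range a).image (fun j0 => Nat.pair (Nat.pair 1 v) j0)) := by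
      rw [Finset.disjoint_left]
      rintro p hp0 hp1
      simp only [Finset.mem_image, Finset.mem_range] at hp0 hp1
      obtain ⟨x, _, rfl⟩ := hp0
      obtain ⟨y, _, hxy⟩ := hp1
      have := (Nat.pair_eq_pair.mp hxy).1
      have := (Nat.pair_eq_pair.mp this).1
      omega
    have hdL : Disjoint (((range T).image (fun j0 => Nat.pair (Nat.pair 0 v) j0))
        ∪ ((range a).image (fun j0 => Nat.pair (Nat.pair 1 v) j0))) (Fse T L) := by
      rw [Finset.disjoint_left]
      rintro p hp0 hpL
      obtain ⟨e, he, b, j0, rfl⟩ := mem_Fse hpL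
      have heL : e.1 ≤ w := vert_le hV' e he
      simp only [Finset.mem_union, Finset.mem_image, Finset.mem_range] at hp0
      rcases hp0 with ⟨x, _, hxy⟩ | ⟨x, _, hxy⟩ <;>
      · have h1 := (Nat.pair_eq_pair.mp hxy).1
        have h2 := (Nat.pair_eq_pair.mp h1).2
        omega
    show ((((range T).image (fun j0 => Nat.pair (Nat.pair 0 v) j0))
      ∪ ((range a).image (fun j0 => Nat.pair (Nat.pair 1 v) j0))) ∪ Fse T L).card
      = (((v,w,a,K) :: L).length) * T + sumA ((v,w,a,K) :: L)
    rw [Finset.card_union_of_disjoint hdL, Finset.card_union_of_disjoint hd01,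
      hc0, hc1, ih hV']
    simp only [List.length_cons, sumA]
    ring

lemma Cyl_subset {T : ℕ} : ∀ {L : List E4} {j r : ℕ}, Valid T j r L →
    Cyl T L ⊆ {ω | ∀ p ∈ Fse T L, bit ω p = piL T L p} := by
  intro L
  induction L with
  | nil => intro j r _ ω _ p hp; simp [Fse] at hp
  | cons e0 L ih =>
    obtain ⟨v, w, a, K⟩ := e0
    intro j r hV ω hω p hp
    obtain ⟨_, rfl, hj, hw, har, _, hV'⟩ := hV
    obtain ⟨⟨hS, hA⟩, hC⟩ := hω
    simp only [Fse, Finset.mem_union, Finset.mem_image, Finset.mem_range] at hp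
    rcases hp with (⟨j0, hj0, rfl⟩ | ⟨j0, hj0, rfl⟩) | hp
    · have : bit ω (Nat.pair (Nat.pair 0 v) j0) = K.testBit (T-1-j0) := hS j0 hj0
      simp only [piL, Nat.unpair_pair, if_pos rfl]
      exact this
    · have hb : bit ω (Nat.pair (Nat.pair 1 v) j0) = true := hA j0 hj0
      have hne : Nat.pair 1 v ≠ Nat.pair 0 v := by
        intro h; have := (Nat.pair_eq_pair.mp h).1; omega
      simp only [piL, Nat.unpair_pair, if_neg hne, if_pos rfl]
      exact hb
    · obtain ⟨e, he, b, j0, hpe⟩ := mem_Fse hp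
      have heL : e.1 ≤ w := vert_le hV' e he
      have hne0 : (Nat.unpair p).1 ≠ Nat.pair 0 v := by
        rw [hpe, Nat.unpair_pair]
        intro h; have := (Nat.pair_eq_pair.mp h).2; omega
      have hne1 : (Nat.unpair p).1 ≠ Nat.pair 1 v := by
        rw [hpe, Nat.unpair_pair]
        intro h; have := (Nat.pair_eq_pair.mp h).2; omega
      simp only [piL, if_neg hne0, if_neg hne1]
      exact ih hV' hC p hp

lemma Cyl_measure {T j r : ℕ} {L : List E4} (h : Valid T j r L) :
    μ0 (Cyl T L) ≤ (2:ℝ≥0∞)⁻¹ ^ (L.length * T + sumA L) := by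
  calc μ0 (Cyl T L) ≤ μ0 {ω | ∀ p ∈ Fse T L, bit ω p = piL T L p} :=
        measure_mono (Cyl_subset h)
  _ ≤ (2:ℝ≥0∞)⁻¹ ^ (Fse T L).card := cyl_measure _ _
  _ = (2:ℝ≥0∞)⁻¹ ^ (L.length * T + sumA L) := by rw [Fse_card h]

-- ## The covering lemma

lemma mem_SliceCyl_Kof (ω : ℝ) (i T : ℕ) : ω ∈ SliceCyl i T (Kof ω i T) := by
  intro j hj
  exact (Kof_testBit ω i hj).symm

lemma parent_lt {v : ℕ} (ω : ℝ) (hv : 0 < v) : parent ω v < v := Nat.mod_lt _ hv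

lemma parent_mem_PK {v T : ℕ} (ω : ℝ) (hv : 0 < v) :
    Kof ω (Nat.pair 0 v) T ∈ PK v (parent ω v) T := by
  classical
  set i := Nat.pair 0 v with hi
  set u := uSlice ω i with hu
  set K := Kof ω i T with hK
  rcases eq_or_lt_of_le (uSlice_le_one ω i) with h1 | h1
  · -- u = 1 : all bits true, K = 2^T - 1
    have hall : ∀ j, j < T → sl ω i j = true := by
      intro j hj
      apply bit_true_of_gt
      show (1:ℝ) - (1/2:ℝ)^(j+1) < uSlice ω i
      rw [h1]
      have : (0:ℝ) < (1/2:ℝ)^(j+1) := by positivity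
      linarith
    rw [hK, Kof_allTrue hall]
    exact Finset.mem_union_right _ (Finset.mem_singleton_self _)
  · -- u < 1
    have hu0 : (0:ℝ) ≤ u := uSlice_nonneg ω i
    have hv' : (0:ℝ) < v := by exact_mod_cast hv
    have hfl0 : (0:ℤ) ≤ ⌊u * v⌋ := Int.floor_nonneg.mpr (by positivity)
    have hflv : ⌊u * v⌋ < (v:ℤ) := by
      apply Int.floor_lt.mpr
      push_cast
      nlinarith
    have hpar : parent ω v = (⌊u * v⌋).toNat := by
      unfold parent
      rw [← hi, ← hu]
      apply Nat.mod_eq_of_lt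
      omega
    set w := parent ω v with hwdef
    have hcast : ((w:ℕ):ℝ) = ((⌊u * v⌋ : ℤ) : ℝ) := by
      rw [hpar]
      exact_mod_cast congrArg (fun z => ((z:ℤ):ℝ)) (Int.toNat_of_nonneg hfl0)
    have hw1 : (w:ℝ) ≤ u * v := by rw [hcast]; exact Int.floor_le _
    have hw2 : u * v < (w:ℝ) + 1 := by rw [hcast]; exact Int.lt_floor_add_one _
    have h2T : (0:ℝ) < 2^T := by positivity
    have hKY : (K:ℝ)/2^T = Y ω i T := (Y_eq_Kof ω i T).symm
    have hYle : (K:ℝ)/2^T ≤ u := by rw [hKY, hu]; exact Y_le_uSlice ω i T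
    have huleY : u ≤ (K:ℝ)/2^T + (1/2:ℝ)^T := by
      rw [hKY, hu]; exact uSlice_le_Y ω i T
    have hhalf : (1/2:ℝ)^T = 1/2^T := by
      rw [div_pow, one_pow]
    apply Finset.mem_union_left
    rw [Finset.mem_filter, Finset.mem_range]
    refine ⟨Kof_lt ω i T, ?_, ?_⟩
    · -- w/v ≤ (K+1)/2^T
      have : (w:ℝ)/v ≤ u := by rw [div_le_iff₀ hv']; linarith
      calc (w:ℝ)/v ≤ u := this
      _ ≤ ((K:ℝ)+1)/2^T := by
          rw [hhalf] at huleY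
          rw [add_div]
          linarith
    · -- K/2^T ≤ (w+1)/v
      calc (K:ℝ)/2^T ≤ u := hYle
      _ ≤ ((w:ℝ)+1)/v := by rw [le_div_iff₀ hv']; linarith

lemma cover {T : ℕ} : ∀ j r (ω : ℝ), r ≤ reach ω j →
    ∃ L, Valid T j r L ∧ ω ∈ Cyl T L := by
  intro j
  induction j using Nat.strong_induction_on with
  | _ j ih =>
    intro r ω hr
    rcases Nat.eq_zero_or_pos r with rfl | hrpos
    · refine ⟨[], ?_, Set.mem_univ ω⟩
      rfl
    · cases j with
      | zero =>
        rw [reach] at hr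
        omega
      | succ j' =>
        have hw : parent ω (j'+1) < j'+1 := parent_lt ω (Nat.succ_pos j')
        have hmin : min (parent ω (j'+1)) j' = parent ω (j'+1) := min_eq_left (by omega)
        have hre : reach ω (j'+1)
            = reach ω (parent ω (j'+1)) + geom (uSlice ω (Nat.pair 1 (j'+1))) := by
          rw [reach, hmin]
        set w := parent ω (j'+1) with hwd
        set g := geom (uSlice ω (Nat.pair 1 (j'+1))) with hgd
        set a := min g r with had
        have har : a ≤ r := min_le_right _ _
        have hreach : r - a ≤ reach ω w := by
          rw [hre] at hr
          omega
        obtain ⟨L', hL', hωL'⟩ := ih w (by omega) (r-a) ω hreach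
        refine ⟨(j'+1, w, a, Kof ω (Nat.pair 0 (j'+1)) T) :: L', ?_, ?_⟩
        · exact ⟨hrpos, rfl, Nat.succ_pos j', hw, har,
            parent_mem_PK ω (Nat.succ_pos j'), hL'⟩
        · refine ⟨⟨mem_SliceCyl_Kof ω _ T, ?_⟩, hωL'⟩
          intro j0 hj0
          apply bit_true_of_gt
          exact geom_ge (min_le_left g r) j0 hj0

-- ## The weighted count of valid lists

open Classical in
def G (T j r : ℕ) : ℝ≥0∞ :=
  ∑' L : List E4, if Valid T j r L then (2:ℝ≥0∞)⁻¹ ^ (L.length * T + sumA L) else 0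

def B (j : ℕ) : ℕ := (j+8).choose 8

lemma B_pos (j : ℕ) : 0 < B j := Nat.choose_pos (by omega)

lemma B_sum (n : ℕ) : ∑ j ∈ range n, B j = (n+8).choose 9 := by
  induction n with
  | zero => simp [Nat.choose_eq_zero_of_lt]
  | succ n ih =>
    rw [sum_range_succ, ih]
    have : n+1+8 = (n+8)+1 := by ring
    rw [this, Nat.choose_succ_succ' (n+8) 8]
    unfold B
    simp only [show (8:ℕ)+1 = 9 from rfl]
    omega

lemma B_rec (n : ℕ) : 8 * ((n+8).choose 9) ≤ n * B n := by
  have h : (n+8).choose 9 * 9 = (n+8).choose 8 * n := by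
    have h := Nat.choose_succ_right_eq (n+8) 8
    have h2 : (n+8) - 8 = n := by omega
    rw [h2] at h
    exact_mod_cast h
  unfold B
  calc 8 * ((n+8).choose 9) ≤ (n+8).choose 9 * 9 := by omega
  _ = (n+8).choose 8 * n := h
  _ = n * (n+8).choose 8 := by ring

lemma G_zero (T j : ℕ) : G T j 0 = 1 := by
  classical
  rw [G, tsum_eq_sum (s := ({[]} : Finset (List E4)))]
  · rw [Finset.sum_singleton, if_pos]
    · simp [sumA]
    · show (0:ℕ) = 0
      rfl
  · intro L hL
    rw [if_neg]
    cases L with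
    | nil => simp at hL
    | cons e L' =>
      obtain ⟨v,w,a,K⟩ := e
      intro hV
      exact absurd hV.1 (lt_irrefl 0)

lemma G_left_zero {T r : ℕ} (hr : 0 < r) : G T 0 r = 0 := by
  classical
  rw [G, ENNReal.tsum_eq_zero]
  intro L
  rw [if_neg]
  cases L with
  | nil =>
    intro hV
    have h0 : r = 0 := hV
    omega
  | cons e L' =>
    obtain ⟨v,w,a,K⟩ := e
    intro hV
    exact absurd hV.2.2.1 (lt_irrefl 0)

lemma G_rec {T j r : ℕ} (hj : 0 < j) (hr : 0 < r) :
    G T j r = ∑ w ∈ range j, ∑ a ∈ range (r+1),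
      ((PK j w T).card : ℝ≥0∞) * ((2:ℝ≥0∞)⁻¹^(T+a) * G T w (r-a)) := by
  classical
  have hco : Function.Injective (fun p : E4 × List E4 => p.1 :: p.2) := by
    intro p q hpq
    simp only [List.cons.injEq] at hpq
    exact Prod.ext hpq.1 hpq.2
  have hsupp : Function.support (fun L : List E4 =>
      if Valid T j r L then (2:ℝ≥0∞)⁻¹ ^ (L.length * T + sumA L) else 0)
      ⊆ Set.range (fun p : E4 × List E4 => p.1 :: p.2) := by
    intro L hL
    cases L with
    | nil =>
      exfalso
      apply hL
      show (if Valid T j r ([] : List E4)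
        then (2:ℝ≥0∞)⁻¹ ^ (([] : List E4).length * T + sumA []) else 0) = 0
      rw [if_neg]
      intro hV
      have h0 : r = 0 := hV
      omega
    | cons e L' => exact ⟨(e, L'), rfl⟩
  have hflat : G T j r = ∑' (v : ℕ) (w : ℕ) (a : ℕ) (K : ℕ), (∑' (L' : List E4), if Valid T j r ((v,w,a,K) :: L') then (2:ℝ≥0∞)⁻¹ ^ (((v,w,a,K) :: L').length * T + sumA ((v,w,a,K) :: L')) else 0) := by
    rw [G, ← Function.Injective.tsum_eq hco hsupp]
    simp only [ENNReal.tsum_prod']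
  rw [hflat]
  have step1 : ∀ v w a K, (∑' (L' : List E4), if Valid T j r ((v,w,a,K) :: L') then (2:ℝ≥0∞)⁻¹ ^ (((v,w,a,K) :: L').length * T + sumA ((v,w,a,K) :: L')) else 0)
      = if v = j then if w < j then if a ≤ r then
          (if K ∈ PK j w T then (2:ℝ≥0∞)⁻¹^(T+a) * G T w (r-a) else 0)
          else 0 else 0 else 0 := by
    intro v w a K
    by_cases h1 : v = j
    · by_cases h2 : w < j
      · by_cases h3 : a ≤ r
        · by_cases h4 : K ∈ PK j w T
          · rw [if_pos h1, if_pos h2, if_pos h3, if_pos h4, G, ← ENNReal.tsum_mul_left]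
            apply tsum_congr
            intro L'
            by_cases hV : Valid T w (r-a) L'
            · rw [if_pos, if_pos hV, ← pow_add]
              · congr 1
                simp only [List.length_cons, sumA]
                ring
              · exact ⟨hr, h1, hj, h2, h3, (h1 ▸ h4), hV⟩
            · rw [if_neg, if_neg hV, mul_zero]
              intro hVc
              exact hV hVc.2.2.2.2.2.2
          · rw [if_pos h1, if_pos h2, if_pos h3, if_neg h4, ENNReal.tsum_eq_zero]
            intro L'
            rw [if_neg]
            intro hVc
            exact h4 (hVc.2.1 ▸ hVc.2.2.2.2.2.1)
        · rw [if_pos h1, if_pos h2, if_neg h3, ENNReal.tsum_eq_zero]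
          intro L'
          rw [if_neg]
          intro hVc
          exact h3 hVc.2.2.2.2.1
      · rw [if_pos h1, if_neg h2, ENNReal.tsum_eq_zero]
        intro L'
        rw [if_neg]
        intro hVc
        exact h2 (hVc.2.1 ▸ hVc.2.2.2.1)
    · rw [if_neg h1, ENNReal.tsum_eq_zero]
      intro L'
      rw [if_neg]
      intro hVc
      exact h1 hVc.2.1
  calc ∑' (v : ℕ) (w : ℕ) (a : ℕ) (K : ℕ), (∑' (L' : List E4), if Valid T j r ((v,w,a,K) :: L') then (2:ℝ≥0∞)⁻¹ ^ (((v,w,a,K) :: L').length * T + sumA ((v,w,a,K) :: L')) else 0)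
      = ∑' (v : ℕ) (w : ℕ) (a : ℕ) (K : ℕ), (if v = j then if w < j then if a ≤ r then
          (if K ∈ PK j w T then (2:ℝ≥0∞)⁻¹^(T+a) * G T w (r-a) else 0)
          else 0 else 0 else 0) := by
        exact tsum_congr fun v => tsum_congr fun w => tsum_congr fun a =>
          tsum_congr fun K => step1 v w a K
  _ = ∑' (v : ℕ) (w : ℕ) (a : ℕ), (if v = j then if w < j then if a ≤ r then
        ((PK j w T).card : ℝ≥0∞) * ((2:ℝ≥0∞)⁻¹^(T+a) * G T w (r-a))
        else 0 else 0 else 0) := by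
      refine tsum_congr fun v => tsum_congr fun w => tsum_congr fun a => ?_
      by_cases h1 : v = j <;> by_cases h2 : w < j <;> by_cases h3 : a ≤ r <;>
        simp only [h1, h2, h3, if_true, if_false, tsum_zero]
      rw [tsum_eq_sum (s := PK j w T) (fun K hK => if_neg hK)]
      rw [Finset.sum_congr rfl (fun K hK => if_pos hK), Finset.sum_const, nsmul_eq_mul]
  _ = ∑' (v : ℕ) (w : ℕ), (if v = j then if w < j then
        ∑ a ∈ range (r+1), ((PK j w T).card : ℝ≥0∞) * ((2:ℝ≥0∞)⁻¹^(T+a) * G T w (r-a))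
        else 0 else 0) := by
      refine tsum_congr fun v => tsum_congr fun w => ?_
      by_cases h1 : v = j <;> by_cases h2 : w < j <;>
        simp only [h1, h2, if_true, if_false, tsum_zero]
      rw [tsum_eq_sum (s := range (r+1))
        (fun a ha => if_neg (by rw [Finset.mem_range] at ha; omega))]
      exact Finset.sum_congr rfl (fun a ha => if_pos (by rw [Finset.mem_range] at ha; omega))
  _ = ∑' (v : ℕ), (if v = j then
        ∑ w ∈ range j, ∑ a ∈ range (r+1),
          ((PK j w T).card : ℝ≥0∞) * ((2:ℝ≥0∞)⁻¹^(T+a) * G T w (r-a))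
        else 0) := by
      refine tsum_congr fun v => ?_
      by_cases h1 : v = j <;> simp only [h1, if_true, if_false, tsum_zero]
      rw [tsum_eq_sum (s := range j)
        (fun w hw => if_neg (by rw [Finset.mem_range] at hw; omega))]
      exact Finset.sum_congr rfl (fun w hw => if_pos (by rw [Finset.mem_range] at hw; omega))
  _ = ∑ w ∈ range j, ∑ a ∈ range (r+1),
        ((PK j w T).card : ℝ≥0∞) * ((2:ℝ≥0∞)⁻¹^(T+a) * G T w (r-a)) := tsum_ite_eq j _

lemma geo_real (r : ℕ) :
    ∑ a ∈ range (r+1), (1/2:ℝ)^a * (2/3:ℝ)^(r-a) ≤ 4 * (2/3:ℝ)^r := by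
  induction r with
  | zero => norm_num
  | succ r ih =>
    rw [Finset.sum_range_succ']
    have h1 : ∀ a ∈ range (r+1), (1/2:ℝ)^(a+1) * (2/3:ℝ)^(r+1-(a+1))
        = (1/2) * ((1/2:ℝ)^a * (2/3:ℝ)^(r-a)) := by
      intro a ha
      rw [show r+1-(a+1) = r-a by omega, pow_succ]
      ring
    rw [Finset.sum_congr rfl h1, ← Finset.mul_sum]
    have h2 : (0:ℝ) < (2/3:ℝ)^r := by positivity
    simp only [pow_zero, one_mul, Nat.sub_zero]
    rw [pow_succ]
    nlinarith [ih]

lemma geo_sum_bound (r : ℕ) :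
    ∑ a ∈ range (r+1), (2:ℝ≥0∞)⁻¹^a * (2/3:ℝ≥0∞)^(r-a) ≤ 4 * (2/3:ℝ≥0∞)^r := by
  have einv : (2:ℝ≥0∞)⁻¹ = ENNReal.ofReal (1/2:ℝ) := by
    rw [ENNReal.ofReal_div_of_pos (by norm_num)]
    simp
  have e23 : (2/3:ℝ≥0∞) = ENNReal.ofReal (2/3:ℝ) := by
    rw [ENNReal.ofReal_div_of_pos (by norm_num)]
    norm_num
  rw [einv, e23]
  calc ∑ a ∈ range (r+1), ENNReal.ofReal (1/2:ℝ)^a * ENNReal.ofReal (2/3:ℝ)^(r-a)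
      = ENNReal.ofReal (∑ a ∈ range (r+1), (1/2:ℝ)^a * (2/3:ℝ)^(r-a)) := by
        rw [ENNReal.ofReal_sum_of_nonneg (fun a _ => by positivity)]
        exact Finset.sum_congr rfl fun a _ => by
          rw [← ENNReal.ofReal_pow (by norm_num), ← ENNReal.ofReal_pow (by norm_num),
            ← ENNReal.ofReal_mul (by positivity)]
  _ ≤ ENNReal.ofReal (4 * (2/3:ℝ)^r) := ENNReal.ofReal_le_ofReal (geo_real r)
  _ = 4 * ENNReal.ofReal (2/3:ℝ)^r := by
      rw [ENNReal.ofReal_mul (by norm_num), ← ENNReal.ofReal_pow (by norm_num)]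
      norm_num

lemma G_le {T : ℕ} : ∀ j, 4*j ≤ 2^T → ∀ r, G T j r ≤ (2/3:ℝ≥0∞)^r * B j := by
  intro j
  induction j using Nat.strong_induction_on with
  | _ j ih =>
    intro hT r
    rcases Nat.eq_zero_or_pos r with rfl | hr
    · rw [G_zero, pow_zero, one_mul]
      exact_mod_cast Nat.one_le_iff_ne_zero.mpr (B_pos j).ne'
    · rcases Nat.eq_zero_or_pos j with rfl | hj
      · rw [G_left_zero hr]
        exact zero_le
      · have hjfin : ((j:ℝ≥0∞)) ≠ 0 := by exact_mod_cast hj.ne'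
        have hjtop : ((j:ℝ≥0∞)) ≠ ⊤ := ENNReal.natCast_ne_top j
        rw [G_rec hj hr]
        have hcard : ∀ w, ((PK j w T).card : ℝ≥0∞) * (2:ℝ≥0∞)⁻¹^T ≤ 2 / j := by
          intro w
          have hn : (PK j w T).card * j ≤ 2^(T+1) := PK_card w hj hT
          have hn' : ((PK j w T).card : ℝ≥0∞) * (j:ℝ≥0∞) ≤ 2^(T+1) := by
            calc ((PK j w T).card : ℝ≥0∞) * (j:ℝ≥0∞) = (((PK j w T).card * j : ℕ) : ℝ≥0∞) := by
                  push_cast; ring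
            _ ≤ ((2^(T+1) : ℕ) : ℝ≥0∞) := Nat.cast_le.mpr hn
            _ = 2^(T+1) := by push_cast; ring
          have h2T : ((2:ℝ≥0∞)^T) ≠ 0 := by positivity
          have h2Tt : ((2:ℝ≥0∞)^T) ≠ ⊤ := ENNReal.pow_ne_top (by norm_num)
          rw [ENNReal.le_div_iff_mul_le (Or.inl hjfin) (Or.inl hjtop)]
          calc ((PK j w T).card : ℝ≥0∞) * (2:ℝ≥0∞)⁻¹^T * j
              = (((PK j w T).card : ℝ≥0∞) * j) * ((2:ℝ≥0∞)^T)⁻¹ := by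
                rw [← ENNReal.inv_pow]; ring
          _ ≤ (2:ℝ≥0∞)^(T+1) * ((2:ℝ≥0∞)^T)⁻¹ := by gcongr
          _ = 2 := by
              rw [pow_succ, mul_comm ((2:ℝ≥0∞)^T) 2, mul_assoc,
                ENNReal.mul_inv_cancel h2T h2Tt, mul_one]
        calc ∑ w ∈ range j, ∑ a ∈ range (r+1), ((PK j w T).card : ℝ≥0∞) * ((2:ℝ≥0∞)⁻¹^(T+a) * G T w (r-a))
            ≤ ∑ w ∈ range j, ∑ a ∈ range (r+1), (2/(j:ℝ≥0∞)) * ((B w : ℝ≥0∞) * ((2:ℝ≥0∞)⁻¹^a * (2/3:ℝ≥0∞)^(r-a))) := by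
              refine Finset.sum_le_sum fun w hw => Finset.sum_le_sum fun a ha => ?_
              rw [Finset.mem_range] at hw
              have hG := ih w hw (by omega) (r-a)
              calc ((PK j w T).card : ℝ≥0∞) * ((2:ℝ≥0∞)⁻¹^(T+a) * G T w (r-a))
                  = (((PK j w T).card : ℝ≥0∞) * (2:ℝ≥0∞)⁻¹^T) * ((2:ℝ≥0∞)⁻¹^a * G T w (r-a)) := by
                    rw [pow_add]; ring
              _ ≤ (2/(j:ℝ≥0∞)) * ((2:ℝ≥0∞)⁻¹^a * ((2/3:ℝ≥0∞)^(r-a) * (B w : ℝ≥0∞))) := by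
                    gcongr
                    exact hcard w
              _ = (2/(j:ℝ≥0∞)) * ((B w : ℝ≥0∞) * ((2:ℝ≥0∞)⁻¹^a * (2/3:ℝ≥0∞)^(r-a))) := by ring
        _ = (2/(j:ℝ≥0∞)) * ((∑ w ∈ range j, (B w : ℝ≥0∞)) * (∑ a ∈ range (r+1), (2:ℝ≥0∞)⁻¹^a * (2/3:ℝ≥0∞)^(r-a))) := by
              rw [Finset.sum_mul_sum, Finset.mul_sum]
              refine Finset.sum_congr rfl fun w _ => ?_
              rw [Finset.mul_sum]
        _ ≤ (2/(j:ℝ≥0∞)) * ((((j+8).choose 9 : ℕ) : ℝ≥0∞) * (4 * (2/3:ℝ≥0∞)^r)) := by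
              gcongr
              · exact le_of_eq (by rw [← Nat.cast_sum, B_sum])
              · exact geo_sum_bound r
        _ = ((8 * (((j+8).choose 9 : ℕ) : ℝ≥0∞)) / j) * (2/3:ℝ≥0∞)^r := by
              simp only [div_eq_mul_inv]
              ring
        _ ≤ (B j : ℝ≥0∞) * (2/3:ℝ≥0∞)^r := by
              gcongr
              rw [ENNReal.div_le_iff hjfin hjtop]
              calc (8 * (((j+8).choose 9 : ℕ) : ℝ≥0∞)) = ((8 * ((j+8).choose 9) : ℕ) : ℝ≥0∞) := by
                    push_cast; ring
              _ ≤ ((j * B j : ℕ) : ℝ≥0∞) := Nat.cast_le.mpr (B_rec j)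
              _ = (B j : ℝ≥0∞) * j := by push_cast; ring
        _ = (2/3:ℝ≥0∞)^r * B j := mul_comm _ _

-- ## Numeric facts

lemma exp25 : Real.exp (2/5) ≤ 3/2 := by
  have h5 : (Real.exp (2/5))^5 = Real.exp 2 := by
    rw [← Real.exp_nat_mul]
    norm_num
  have h2 : Real.exp 2 ≤ (3/2:ℝ)^5 := by
    have h1 := Real.exp_one_lt_d9
    have he2 : Real.exp 2 = (Real.exp 1)^2 := by
      rw [← Real.exp_nat_mul]
      norm_num
    rw [he2]
    nlinarith [Real.exp_pos 1]
  have h6 : (Real.exp (2/5))^5 ≤ (3/2:ℝ)^5 := by rw [h5]; exact h2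
  exact le_of_pow_le_pow_left₀ (by norm_num) (by norm_num) h6

lemma four_n_le (n : ℕ) : 4 * n ≤ 2 ^ (2*(n+1)) := by
  have h1 : n < 2^n := Nat.lt_two_pow_self
  have h2 : 2^n ≤ 2^(2*n) := Nat.pow_le_pow_right (by norm_num) (by omega)
  have h3 : 2^(2*(n+1)) = 4 * 2^(2*n) := by
    rw [show 2*(n+1) = 2*n + 2 by ring, pow_add]
    ring
  rw [h3]
  omega

lemma choose_le_n36 {n : ℕ} (hn : 2 ≤ n) : (n+8).choose 9 ≤ n^36 := by
  have h1 : (n+8).choose 9 ≤ (n+8)^9 := Nat.choose_le_pow _ _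
  have h2 : n+8 ≤ n^4 := by
    have ha : 8 ≤ n^3 := by
      calc 8 = 2^3 := rfl
      _ ≤ n^3 := Nat.pow_le_pow_left hn 3
    have hb : n ≤ n^3 := Nat.le_self_pow (by norm_num) n
    have hc : n^4 = n^3 * n := by ring
    nlinarith
  calc (n+8).choose 9 ≤ (n+8)^9 := h1
  _ ≤ (n^4)^9 := Nat.pow_le_pow_left h2 9
  _ = n^36 := by rw [← pow_mul]

lemma ofReal_two_thirds : (2/3:ℝ≥0∞) = ENNReal.ofReal (2/3:ℝ) := by
  rw [ENNReal.ofReal_div_of_pos (by norm_num)]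
  norm_num

theorem final : ∀ n : ℕ, 2 ≤ n → ∀ h : ℝ, 200 * Real.log n ≤ h →
    μ0 {ω | ∃ j < n, h < (reach ω j : ℝ)} ≤ ENNReal.ofReal (Real.exp (-(1/5) * h)) := by
  intro n hn h hh
  classical
  set T := 2*(n+1) with hTd
  set m := ⌊h⌋₊ + 1 with hmd
  have hn1 : (1:ℝ) ≤ n := by exact_mod_cast le_trans (by norm_num) hn
  have hlogn : 0 ≤ Real.log n := Real.log_nonneg hn1
  have hh0 : 0 ≤ h := le_trans (by positivity) hh
  have hmh : h < (m:ℝ) := by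
    rw [hmd]
    push_cast
    exact Nat.lt_floor_add_one h
  -- covering
  have hsub : {ω : ℝ | ∃ j < n, h < (reach ω j : ℝ)}
      ⊆ ⋃ (j : ℕ), ⋃ (L : List E4), {ω | j < n ∧ Valid T j m L ∧ ω ∈ Cyl T L} := by
    rintro ω ⟨j, hj, hr⟩
    have hrm : m ≤ reach ω j := by
      have h1 : ⌊h⌋₊ < reach ω j := (Nat.floor_lt hh0).mpr hr
      omega
    obtain ⟨L, hL, hωL⟩ := cover j m ω hrm
    exact Set.mem_iUnion.mpr ⟨j, Set.mem_iUnion.mpr ⟨L, hj, hL, hωL⟩⟩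
  have hterm : ∀ (j : ℕ) (L : List E4), μ0 {ω | j < n ∧ Valid T j m L ∧ ω ∈ Cyl T L}
      ≤ (if j < n then (if Valid T j m L then (2:ℝ≥0∞)⁻¹ ^ (L.length * T + sumA L) else 0) else 0) := by
    intro j L
    by_cases h1 : j < n
    · by_cases h2 : Valid T j m L
      · rw [if_pos h1, if_pos h2]
        refine le_trans (measure_mono ?_) (Cyl_measure h2)
        intro ω hω
        exact hω.2.2
      · rw [if_pos h1, if_neg h2]
        have he : {ω : ℝ | j < n ∧ Valid T j m L ∧ ω ∈ Cyl T L} = ∅ := by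
          ext ω
          simp only [Set.mem_setOf_eq, Set.mem_empty_iff_false, iff_false]
          intro hc
          exact h2 hc.2.1
        rw [he, measure_empty]
    · rw [if_neg h1]
      have he : {ω : ℝ | j < n ∧ Valid T j m L ∧ ω ∈ Cyl T L} = ∅ := by
        ext ω
        simp only [Set.mem_setOf_eq, Set.mem_empty_iff_false, iff_false]
        intro hc
        exact h1 hc.1
      rw [he, measure_empty]
  have hGsum : ∀ j : ℕ, (∑' (L : List E4),
      (if j < n then (if Valid T j m L then (2:ℝ≥0∞)⁻¹ ^ (L.length * T + sumA L) else 0) else 0))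
      = if j < n then G T j m else 0 := by
    intro j
    by_cases h1 : j < n
    · rw [if_pos h1, G]
      exact tsum_congr fun L => by rw [if_pos h1]
    · rw [if_neg h1]
      rw [ENNReal.tsum_eq_zero]
      intro L
      rw [if_neg h1]
  have hstep1 : μ0 {ω : ℝ | ∃ j < n, h < (reach ω j : ℝ)} ≤ ∑ j ∈ range n, G T j m := by
    calc μ0 {ω : ℝ | ∃ j < n, h < (reach ω j : ℝ)}
        ≤ μ0 (⋃ (j : ℕ), ⋃ (L : List E4), {ω | j < n ∧ Valid T j m L ∧ ω ∈ Cyl T L}) :=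
          measure_mono hsub
    _ ≤ ∑' (j : ℕ), μ0 (⋃ (L : List E4), {ω | j < n ∧ Valid T j m L ∧ ω ∈ Cyl T L}) :=
          measure_iUnion_le _
    _ ≤ ∑' (j : ℕ), ∑' (L : List E4), μ0 {ω | j < n ∧ Valid T j m L ∧ ω ∈ Cyl T L} :=
          ENNReal.tsum_le_tsum fun j => measure_iUnion_le _
    _ ≤ ∑' (j : ℕ), ∑' (L : List E4),
          (if j < n then (if Valid T j m L then (2:ℝ≥0∞)⁻¹ ^ (L.length * T + sumA L) else 0) else 0) :=
          ENNReal.tsum_le_tsum fun j => ENNReal.tsum_le_tsum fun L => hterm j L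
    _ = ∑' (j : ℕ), (if j < n then G T j m else 0) := tsum_congr hGsum
    _ = ∑ j ∈ range n, G T j m := by
          rw [tsum_eq_sum (s := range n)
            (fun j hj => if_neg (by rwa [Finset.mem_range] at hj))]
          exact Finset.sum_congr rfl fun j hj => if_pos (by rwa [Finset.mem_range] at hj)
  have hstep2 : (∑ j ∈ range n, G T j m) ≤ (2/3:ℝ≥0∞)^m * ((n:ℝ≥0∞))^36 := by
    calc ∑ j ∈ range n, G T j m ≤ ∑ j ∈ range n, (2/3:ℝ≥0∞)^m * (B j : ℝ≥0∞) := by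
          refine Finset.sum_le_sum fun j hj => ?_
          rw [Finset.mem_range] at hj
          refine G_le j ?_ m
          calc 4*j ≤ 4*n := by omega
          _ ≤ 2^(2*(n+1)) := four_n_le n
    _ = (2/3:ℝ≥0∞)^m * (((n+8).choose 9 : ℕ) : ℝ≥0∞) := by
          rw [← Finset.mul_sum, ← Nat.cast_sum, B_sum]
    _ ≤ (2/3:ℝ≥0∞)^m * ((n:ℝ≥0∞))^36 := by
          gcongr
          calc (((n+8).choose 9 : ℕ) : ℝ≥0∞) ≤ ((n^36 : ℕ) : ℝ≥0∞) :=
                Nat.cast_le.mpr (choose_le_n36 hn)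
          _ = ((n:ℝ≥0∞))^36 := by push_cast; ring
  -- real-number estimate
  have hreal : (2/3:ℝ)^m * (n:ℝ)^36 ≤ Real.exp (-(1/5) * h) := by
    have hn0 : (0:ℝ) < n := by linarith
    have h23 : (2/3:ℝ) ≤ Real.exp (-(2/5)) := by
      rw [Real.exp_neg]
      have hx := inv_anti₀ (Real.exp_pos (2/5)) exp25
      norm_num at hx ⊢
      linarith
    have hp1 : (2/3:ℝ)^m ≤ Real.exp (-(2/5) * m) := by
      calc (2/3:ℝ)^m ≤ (Real.exp (-(2/5)))^m := pow_le_pow_left₀ (by norm_num) h23 m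
      _ = Real.exp (-(2/5) * m) := by
          rw [← Real.exp_nat_mul]
          ring_nf
    have hp2 : (n:ℝ)^36 = Real.exp (36 * Real.log n) := by
      rw [show (36:ℝ) * Real.log n = Real.log ((n:ℝ)^36) by rw [Real.log_pow]; push_cast; ring]
      rw [Real.exp_log (by positivity)]
    calc (2/3:ℝ)^m * (n:ℝ)^36 ≤ Real.exp (-(2/5) * m) * Real.exp (36 * Real.log n) := by
          rw [hp2]
          exact mul_le_mul_of_nonneg_right hp1 (le_of_lt (Real.exp_pos _))
    _ = Real.exp (-(2/5) * m + 36 * Real.log n) := (Real.exp_add _ _).symm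
    _ ≤ Real.exp (-(1/5) * h) := by
        apply Real.exp_le_exp.mpr
        have hlogh : Real.log n ≤ h / 200 := by linarith
        have hm' : h ≤ (m:ℝ) := le_of_lt hmh
        nlinarith
  calc μ0 {ω : ℝ | ∃ j < n, h < (reach ω j : ℝ)} ≤ ∑ j ∈ range n, G T j m := hstep1
  _ ≤ (2/3:ℝ≥0∞)^m * ((n:ℝ≥0∞))^36 := hstep2
  _ = ENNReal.ofReal ((2/3:ℝ)^m * (n:ℝ)^36) := by
      rw [ENNReal.ofReal_mul (by positivity)]
      congr 1
      · rw [ofReal_two_thirds, ← ENNReal.ofReal_pow (by norm_num)]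
      · rw [← ENNReal.ofReal_natCast n, ← ENNReal.ofReal_pow (by positivity)]
  _ ≤ ENNReal.ofReal (Real.exp (-(1/5) * h)) := ENNReal.ofReal_le_ofReal hreal

end
end S12

theorem statement12 :
    ∃ c C : ℝ, 0 < c ∧ 0 < C ∧ ∀ n : ℕ, 2 ≤ n → ∀ h : ℝ, C * Real.log n ≤ h →
      μ0 {ω | ∃ j < n, h < (reach ω j : ℝ)} ≤ ENNReal.ofReal (Real.exp (-c * h)) := by
  refine ⟨1/5, 200, by norm_num, by norm_num, ?_⟩
  intro n hn h hh
  exact S12.final n hn h hh
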